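/- For any simplicial complex K ≠ Δ_[m] on [m] with m ≥ 2, μ_i(K) = α_i(K^∨) for all 0 ≤ i ≤ m-1, where μ_k(K) = (-1)^{m-k-1} Σ_{j=0}^{k} C(m-j, k-j) α_j(K) and K^∨ is the Alexander dual. -/

import Mathlib

open Finset Polynomial

/-- A (nonempty) abstract simplicial complex on the vertex set `Fin m`. -/
def IsSimplicialComplex {m : ℕ} (K : Finset (Finset (Fin m))) : Prop :=
  ∅ ∈ K ∧ ∀ σ ∈ K, ∀ τ ⊆ σ, τ ∈ K

/-- `faceNum K j` is the number of faces of `K` of cardinality `j` (this is `f_{j-1}`). -/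
def faceNum {m : ℕ} (K : Finset (Finset (Fin m))) (j : ℕ) : ℕ :=
  (K.filter fun s => s.card = j).card

/-- The polynomial `∑_{p=0}^{m-1} f_{p-1} (t-1)^p`; its coefficients form the α-vector. -/
noncomputable def alphaPoly {m : ℕ} (K : Finset (Finset (Fin m))) : Polynomial ℤ :=
  ∑ p ∈ Finset.range m, Polynomial.C (faceNum K p : ℤ) * (Polynomial.X - 1) ^ p

/-- The combinatorial Alexander dual of `K`. -/
def dualC {m : ℕ} (K : Finset (Finset (Fin m))) : Finset (Finset (Fin m)) :=
  Finset.univ.filter fun σ => σᶜ ∉ K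

/-- The link of a face `S` in `K`. -/
def linkC {m : ℕ} (K : Finset (Finset (Fin m))) (S : Finset (Fin m)) :
    Finset (Finset (Fin m)) :=
  Finset.univ.filter fun T => Disjoint T S ∧ T ∪ S ∈ K

/-- The (non-reduced) Euler characteristic `χ(L) = ∑_{∅≠σ∈L} (-1)^{|σ|-1}`. -/
def eulerChar {m : ℕ} (L : Finset (Finset (Fin m))) : ℤ :=
  ∑ σ ∈ L.filter (· ≠ ∅), (-1 : ℤ) ^ (σ.card - 1)

/-- `f_{j-1}(Bier(K))`: the number of faces `I ⊔ J'` of the Bier sphere of cardinality `j`. -/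
def bierFaceNum {m : ℕ} (K : Finset (Finset (Fin m))) (j : ℕ) : ℕ :=
  ((K ×ˢ dualC K).filter fun p => Disjoint p.1 p.2 ∧ p.1.card + p.2.card = j).card

/-- `μ_k(K) = (-1)^{m-k-1} ∑_{j=0}^{k} C(m-j, k-j) α_j(K)`. -/
noncomputable def muVec {m : ℕ} (K : Finset (Finset (Fin m))) (k : ℕ) : ℤ :=
  (-1 : ℤ) ^ (m - k - 1) *
    ∑ j ∈ Finset.range (k + 1), ((m - j).choose (k - j) : ℤ) * (alphaPoly K).coeff j

/- ### Auxiliary lemmas -/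

lemma coeff_Xs1 (c j : ℕ) : ((X - 1 : ℤ[X])^c).coeff j = (-1 : ℤ)^(c-j) * (c.choose j : ℤ) := by
  have h : (X - 1 : ℤ[X]) = X + C (-1) := by rw [map_neg, C_1]; ring
  rw [h, coeff_X_add_C_pow]

lemma neg_one_pow_par {R : Type*} [Monoid R] [HasDistribNeg R] {a b : ℕ} (h : a % 2 = b % 2) :
    (-1 : R)^a = (-1)^b := by
  rcases Nat.even_or_odd a with ha | ha
  · have ha' := Nat.even_iff.1 ha
    rw [ha.neg_one_pow, (Nat.even_iff.2 (by omega : b % 2 = 0)).neg_one_pow]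
  · have ha' := Nat.odd_iff.1 ha
    rw [ha.neg_one_pow, (Nat.odd_iff.2 (by omega : b % 2 = 1)).neg_one_pow]

lemma alphaPoly_eq_sum {m : ℕ} {L : Finset (Finset (Fin m))}
    (hL : ∀ σ ∈ L, σ.card < m) :
    alphaPoly L = ∑ σ ∈ L, (X - 1 : ℤ[X]) ^ σ.card := by
  rw [alphaPoly,
    ← Finset.sum_fiberwise_of_maps_to (g := Finset.card)
      (fun σ hσ => Finset.mem_range.2 (hL σ hσ)) (fun σ => (X - 1 : ℤ[X]) ^ σ.card)]
  refine Finset.sum_congr rfl fun p _ => ?_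
  rw [Finset.sum_congr rfl (fun σ hσ => by rw [(Finset.mem_filter.1 hσ).2]),
    Finset.sum_const, nsmul_eq_mul, faceNum, map_natCast]

lemma sum_univ_Xs1 (m : ℕ) :
    ∑ σ : Finset (Fin m), (X - 1 : ℤ[X]) ^ σ.card = X ^ m := by
  rw [← Finset.sum_fiberwise_of_maps_to (t := Finset.range (m + 1)) (g := Finset.card)
      (fun σ _ => Finset.mem_range.2 (Nat.lt_succ_of_le
        (by simpa using Finset.card_le_univ σ)))
      (fun σ => (X - 1 : ℤ[X]) ^ σ.card)]
  have hbin : (X : ℤ[X]) ^ m = ((X - 1) + 1) ^ m := by ring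
  rw [hbin, add_pow]
  refine Finset.sum_congr rfl fun p _ => ?_
  rw [Finset.sum_congr rfl (fun σ hσ => by rw [(Finset.mem_filter.1 hσ).2]),
    Finset.sum_const, nsmul_eq_mul]
  have hcard : (Finset.univ.filter fun s : Finset (Fin m) => s.card = p).card
      = m.choose p := by
    rw [← Finset.powerset_univ, ← Finset.powersetCard_eq_filter,
      Finset.card_powersetCard, Finset.card_univ, Fintype.card_fin]
  rw [hcard, one_pow, mul_one]
  ring

lemma alphaPoly_dual {m : ℕ} {K : Finset (Finset (Fin m))} (hK0 : ∅ ∈ K) :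
    alphaPoly (dualC K) = X ^ m - ∑ σ ∈ K, (X - 1 : ℤ[X]) ^ (m - σ.card) := by
  classical
  have hfaces : ∀ σ ∈ dualC K, σ.card < m := by
    intro σ hσ
    have h1 : σ.card ≤ m := by simpa using Finset.card_le_univ σ
    rcases h1.lt_or_eq with h | h
    · exact h
    · exfalso
      have hu : σ = Finset.univ := Finset.eq_univ_of_card σ (by simpa using h)
      have := (Finset.mem_filter.1 hσ).2
      rw [hu, Finset.compl_univ] at this
      exact this hK0
  rw [alphaPoly_eq_sum hfaces]
  have hsplit := Finset.sum_filter_add_sum_filter_not Finset.univ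
    (fun σ : Finset (Fin m) => σᶜ ∈ K) (fun σ => (X - 1 : ℤ[X]) ^ σ.card)
  have hbij : ∑ σ ∈ Finset.univ.filter (fun σ : Finset (Fin m) => σᶜ ∈ K),
      (X - 1 : ℤ[X]) ^ σ.card = ∑ σ ∈ K, (X - 1 : ℤ[X]) ^ (m - σ.card) := by
    refine Finset.sum_nbij' (fun σ => σᶜ) (fun σ => σᶜ) ?_ ?_ ?_ ?_ ?_
    · intro a ha; exact (Finset.mem_filter.1 ha).2
    · intro a ha; simp [ha]
    · intro a _; simp
    · intro a _; simp
    · intro a _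
      congr 1
      have hle : #a ≤ m := by simpa using Finset.card_le_univ a
      rw [Finset.card_compl, Fintype.card_fin]
      omega
  have hdual : dualC K = Finset.univ.filter (fun σ : Finset (Fin m) => ¬ σᶜ ∈ K) := rfl
  rw [hdual]
  rw [sum_univ_Xs1 m] at hsplit
  rw [← hbij]
  linear_combination hsplit

/-- The core polynomial identity. -/
lemma core {m : ℕ} (c : ℕ) (hc : c ≤ m) :
    ∑ j ∈ Finset.range (c+1), C (((X - 1 : ℤ[X])^c).coeff j) * X ^ j * (1 + X) ^ (m - j)
      = (-1 : ℤ[X]) ^ c * (1 + X) ^ (m - c) := by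
  have h1 : ((-X) + (1 + X) : ℤ[X]) ^ c
      = ∑ j ∈ Finset.range (c+1), (-X : ℤ[X]) ^ j * (1 + X) ^ (c - j) * (c.choose j : ℤ[X]) :=
    add_pow _ _ c
  have h2 : ((-X) + (1 + X) : ℤ[X]) = 1 := by ring
  rw [h2, one_pow] at h1
  have h3 : (1 + X : ℤ[X]) ^ (m - c)
      = ∑ j ∈ Finset.range (c+1),
          (-X : ℤ[X]) ^ j * (1 + X) ^ (m - j) * (c.choose j : ℤ[X]) := by
    calc (1 + X : ℤ[X]) ^ (m - c)
        = (∑ j ∈ Finset.range (c+1), (-X : ℤ[X]) ^ j * (1 + X) ^ (c - j) * (c.choose j : ℤ[X]))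
            * (1 + X) ^ (m - c) := by rw [← h1]; ring
      _ = ∑ j ∈ Finset.range (c+1),
            (-X : ℤ[X]) ^ j * (1 + X) ^ (m - j) * (c.choose j : ℤ[X]) := by
          rw [Finset.sum_mul]
          refine Finset.sum_congr rfl fun j hj => ?_
          have hj' : j ≤ c := Nat.lt_succ_iff.1 (Finset.mem_range.1 hj)
          have : (c - j) + (m - c) = m - j := by omega
          rw [show (-X : ℤ[X]) ^ j * (1 + X) ^ (c - j) * (c.choose j : ℤ[X]) * (1 + X) ^ (m - c)
              = (-X : ℤ[X]) ^ j * ((1 + X) ^ (c - j) * (1 + X) ^ (m - c)) * (c.choose j : ℤ[X])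
              by ring, ← pow_add, this]
  rw [h3, Finset.mul_sum]
  refine Finset.sum_congr rfl fun j hj => ?_
  have hj' : j ≤ c := Nat.lt_succ_iff.1 (Finset.mem_range.1 hj)
  rw [coeff_Xs1]
  have hsign : (-1 : ℤ[X]) ^ c * (-X) ^ j = (-1 : ℤ[X]) ^ (c - j) * X ^ j := by
    rw [neg_pow (X : ℤ[X]) j, show (-1 : ℤ[X]) ^ c * ((-1) ^ j * X ^ j)
        = ((-1 : ℤ[X]) ^ (c + j)) * X ^ j by rw [pow_add]; ring]
    rw [neg_one_pow_par (R := ℤ[X]) (show (c + j) % 2 = (c - j) % 2 by omega)]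
  calc C ((-1 : ℤ) ^ (c - j) * (c.choose j : ℤ)) * X ^ j * (1 + X) ^ (m - j)
      = ((-1 : ℤ[X]) ^ (c - j) * X ^ j) * (1 + X) ^ (m - j) * (c.choose j : ℤ[X]) := by
        rw [map_mul, map_pow, map_neg, C_1, map_natCast]
        ring
    _ = (-1 : ℤ[X]) ^ c * ((-X) ^ j * (1 + X) ^ (m - j) * (c.choose j : ℤ[X])) := by
        rw [← hsign]; ring

lemma keyPoly {m : ℕ} {K : Finset (Finset (Fin m))}
    (hfaces : ∀ σ ∈ K, σ.card < m) :
    ∑ j ∈ Finset.range m, C ((alphaPoly K).coeff j) * X ^ j * (1 + X) ^ (m - j)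
      = ∑ σ ∈ K, (-1 : ℤ[X]) ^ σ.card * (1 + X) ^ (m - σ.card) := by
  rw [alphaPoly_eq_sum hfaces]
  have hC : ∀ j, (C ((∑ σ ∈ K, (X - 1 : ℤ[X]) ^ σ.card).coeff j) : ℤ[X])
      = ∑ σ ∈ K, C (((X - 1 : ℤ[X]) ^ σ.card).coeff j) := by
    intro j
    rw [Polynomial.finset_sum_coeff, map_sum]
  have hstep : ∑ j ∈ Finset.range m,
        C ((∑ σ ∈ K, (X - 1 : ℤ[X]) ^ σ.card).coeff j) * X ^ j * (1 + X) ^ (m - j)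
      = ∑ σ ∈ K, ∑ j ∈ Finset.range m,
          C (((X - 1 : ℤ[X]) ^ σ.card).coeff j) * X ^ j * (1 + X) ^ (m - j) := by
    rw [← Finset.sum_comm]
    refine Finset.sum_congr rfl fun j _ => ?_
    rw [hC j, Finset.sum_mul, Finset.sum_mul]
  rw [hstep]
  refine Finset.sum_congr rfl fun σ hσ => ?_
  rw [← core σ.card (le_of_lt (hfaces σ hσ))]
  refine (Finset.sum_subset (Finset.range_subset_range.2 (hfaces σ hσ)) ?_).symm
  intro j _ hj
  simp only [Finset.mem_range, not_lt] at hj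
  rw [coeff_Xs1, Nat.choose_eq_zero_of_lt (by omega), Nat.cast_zero, mul_zero, map_zero,
    zero_mul, zero_mul]

theorem stmt3 {m : ℕ} (hm : 2 ≤ m) (K : Finset (Finset (Fin m)))
    (hK : IsSimplicialComplex K) (hKne : K ≠ Finset.univ)
    (i : ℕ) (hi : i ≤ m - 1) :
    muVec K i = (alphaPoly (dualC K)).coeff i := by
  obtain ⟨hempty, hdown⟩ := hK
  have huniv : (Finset.univ : Finset (Fin m)) ∉ K := fun h =>
    hKne (Finset.eq_univ_iff_forall.2 fun σ => hdown _ h σ (Finset.subset_univ σ))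
  have hfaces : ∀ σ ∈ K, σ.card < m := by
    intro σ hσ
    have h1 : σ.card ≤ m := by simpa using Finset.card_le_univ σ
    rcases h1.lt_or_eq with h | h
    · exact h
    · exact absurd (Finset.eq_univ_of_card σ (by simpa using h) ▸ hσ) huniv
  have him : i < m := by omega
  have hQ : ∑ j ∈ Finset.range (i + 1), ((m - j).choose (i - j) : ℤ) * (alphaPoly K).coeff j
      = (∑ j ∈ Finset.range m,
          C ((alphaPoly K).coeff j) * X ^ j * (1 + X) ^ (m - j)).coeff i := by
    have hterm : ∀ j, (C ((alphaPoly K).coeff j) * X ^ j * (1 + X) ^ (m - j)).coeff i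
        = (alphaPoly K).coeff j * (if j ≤ i then ((m - j).choose (i - j) : ℤ) else 0) := by
      intro j
      rw [mul_assoc, coeff_C_mul, coeff_X_pow_mul']
      split_ifs with h
      · rw [coeff_one_add_X_pow]
      · rw [mul_zero]
    rw [Polynomial.finset_sum_coeff]
    simp_rw [hterm]
    rw [← Finset.sum_subset (Finset.range_subset_range.2 (by omega : i + 1 ≤ m))
        (fun j _ hj => by
          simp only [Finset.mem_range, not_lt] at hj
          rw [if_neg (by omega), mul_zero])]
    refine Finset.sum_congr rfl fun j hj => ?_
    rw [if_pos (Nat.lt_succ_iff.1 (Finset.mem_range.1 hj))]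
    ring
  rw [muVec, hQ, keyPoly hfaces, alphaPoly_dual hempty]
  rw [Polynomial.coeff_sub, Polynomial.finset_sum_coeff, Polynomial.finset_sum_coeff,
    Finset.mul_sum, Polynomial.coeff_X_pow, if_neg (by omega : ¬ i = m), zero_sub,
    ← Finset.sum_neg_distrib]
  refine Finset.sum_congr rfl fun σ hσ => ?_
  have hc : σ.card < m := hfaces σ hσ
  rw [coeff_Xs1]
  have hco : ((-1 : ℤ[X]) ^ σ.card * (1 + X) ^ (m - σ.card)).coeff i
      = (-1 : ℤ) ^ σ.card * ((m - σ.card).choose i : ℤ) := by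
    rw [show ((-1 : ℤ[X]) ^ σ.card) = C ((-1 : ℤ) ^ σ.card) by rw [map_pow, map_neg, C_1],
      coeff_C_mul, coeff_one_add_X_pow]
  rw [hco]
  by_cases hcase : i ≤ m - σ.card
  · rw [show (-1 : ℤ) ^ (m - i - 1) * ((-1) ^ σ.card * ((m - σ.card).choose i : ℤ))
        = (-1 : ℤ) ^ ((m - i - 1) + σ.card) * ((m - σ.card).choose i : ℤ) by
        rw [pow_add]; ring,
      show (-((-1 : ℤ) ^ ((m - σ.card) - i) * (((m - σ.card).choose i : ℤ))))
        = (-1 : ℤ) ^ (((m - σ.card) - i) + 1) * ((m - σ.card).choose i : ℤ) by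
        rw [pow_add]; ring]
    congr 1
    exact neg_one_pow_par (by omega)
  · rw [Nat.choose_eq_zero_of_lt (by omega)]
    push_cast; ring
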